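/- If π̲ ≤ p ≤ π̄ and F(p) ≥ 1/2, then p F(p)(1 − F(p)) + (2 F(p) − 1)·∫_{π̲}^{p} x f(x) dx ≤ π̄ F(p)². -/
import Mathlib

/-- If `π̲ ≤ p ≤ π̄` and `F(p) ≥ 1/2`, then
`p F(p)(1 − F(p)) + (2F(p) − 1)·∫_{π̲}^{p} x f(x) dx ≤ πhi F(p)²`. -/
theorem stmt_19
    (πlo πhi : ℝ) (f F : ℝ → ℝ)
    (hπlo : 0 ≤ πlo) (hlt : πlo < πhi)
    (hcont : ContinuousOn f (Set.Icc πlo πhi))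
    (hnn : ∀ x ∈ Set.Icc πlo πhi, 0 ≤ f x)
    (hanti : ∀ x ∈ Set.Icc πlo πhi, ∀ y ∈ Set.Icc πlo πhi, x ≤ y → f y ≤ f x)
    (hone : (∫ x in πlo..πhi, f x) = 1)
    (hF : ∀ p, F p = ∫ x in πlo..p, f x)
    (p : ℝ) (hp : πlo ≤ p) (hp' : p ≤ πhi) (hFp : 1 / 2 ≤ F p) :
    p * F p * (1 - F p) + (2 * F p - 1) * (∫ x in πlo..p, x * f x) ≤
      πhi * (F p) ^ 2 := by
  have hsub : Set.Icc πlo p ⊆ Set.Icc πlo πhi := Set.Icc_subset_Icc le_rfl hp'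
  have hcontf : ContinuousOn f (Set.Icc πlo p) := hcont.mono hsub
  have hif : IntervalIntegrable f MeasureTheory.volume πlo p := by
    apply ContinuousOn.intervalIntegrable
    rwa [Set.uIcc_of_le hp]
  have hixf : IntervalIntegrable (fun x => x * f x) MeasureTheory.volume πlo p := by
    apply ContinuousOn.intervalIntegrable
    rw [Set.uIcc_of_le hp]
    exact (continuousOn_id).mul hcontf
  have hipf : IntervalIntegrable (fun x => p * f x) MeasureTheory.volume πlo p :=
    hif.const_mul p
  have hI : (∫ x in πlo..p, x * f x) ≤ ∫ x in πlo..p, p * f x := by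
    apply intervalIntegral.integral_mono_on hp hixf hipf
    intro x hx
    exact mul_le_mul_of_nonneg_right hx.2 (hnn x (hsub hx))
  have hI' : (∫ x in πlo..p, p * f x) = p * F p := by
    rw [intervalIntegral.integral_const_mul, hF]
  rw [hI'] at hI
  nlinarith [sq_nonneg (F p), hI, hFp, hp']
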